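/- Let A be an abelian group and let (G, β) be a flow-critical A-bordered graph. Then for every edge e ∈ E(G), the A-bordered graph (G − e, β) has a nowhere-zero flow. -/

import Mathlib

open scoped Classical

section FlowDefs

variable {V : Type} [Fintype V] [DecidableEq V] {A : Type} [AddCommGroup A]

/-- `β` is an `A`-boundary for `G`: its values sum to zero on every connected component. -/
def IsBoundary (G : SimpleGraph V) (β : V → A) : Prop :=
  ∀ x : V, ∑ v ∈ Finset.univ.filter (fun v => G.Reachable v x), β v = 0

/-- `(G, β)` has a nowhere-zero flow: an antisymmetric function on ordered adjacent pairs,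
never zero on edges, whose out-sum at each vertex `u` is `β u`. -/
def HasNZFlow (G : SimpleGraph V) (β : V → A) : Prop :=
  ∃ f : V → V → A,
    (∀ u v, G.Adj u v → f u v = - f v u) ∧
    (∀ u v, G.Adj u v → f u v ≠ 0) ∧
    (∀ u : V, ∑ v ∈ Finset.univ.filter (fun v => G.Adj u v), f u v = β u)

/-- `(G, β)/P` has a nowhere-zero flow, where the partition `P` of `V(G)` is given as a setoid:
an antisymmetric, nowhere-zero function on the ordered adjacent pairs lying in distinct parts,
such that for every part, the sum of the values leaving the part is the sum of `β` on it. -/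
def HasNZFlowQuot (G : SimpleGraph V) (β : V → A) (P : Setoid V) : Prop :=
  ∃ f : V → V → A,
    (∀ u v, G.Adj u v → ¬ P.r u v → f u v = - f v u) ∧
    (∀ u v, G.Adj u v → ¬ P.r u v → f u v ≠ 0) ∧
    (∀ x : V,
      ∑ u ∈ Finset.univ.filter (fun u => P.r u x),
        ∑ v ∈ Finset.univ.filter (fun v => G.Adj u v ∧ ¬ P.r u v), f u v
      = ∑ v ∈ Finset.univ.filter (fun v => P.r v x), β v)

/-- The partition `P` is `G`-connected: every part induces a connected subgraph of `G`. -/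
def PartsConnected (G : SimpleGraph V) (P : Setoid V) : Prop :=
  ∀ x : V, (G.induce {v | P.r v x}).Connected

/-- `(G, β)` is a flow-critical `A`-bordered graph: `β` is an `A`-boundary, `G` is connected,
`(G, β)` has no nowhere-zero flow, but `(G, β)/P` has one for every `G`-connected partition `P`
with at least one part of size at least two. -/
def FlowCritical (G : SimpleGraph V) (β : V → A) : Prop :=
  IsBoundary G β ∧ G.Connected ∧ ¬ HasNZFlow G β ∧
  ∀ P : Setoid V, PartsConnected G P → (∃ x y : V, x ≠ y ∧ P.r x y) →
    HasNZFlowQuot G β P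

end FlowDefs

/-- If `(G, β)` is flow-critical, then for every edge `e` of `G`, the bordered graph
`(G − e, β)` has a nowhere-zero flow. -/
theorem flow_critical_deleteEdge (V A : Type) [Fintype V] [DecidableEq V] [AddCommGroup A]
    (G : SimpleGraph V) (β : V → A) (hcrit : FlowCritical G β)
    (e : Sym2 V) (he : e ∈ G.edgeSet) :
    HasNZFlow (G.deleteEdges {e}) β := by
  classical
  obtain ⟨hbd, hconn, hno, hquot⟩ := hcrit
  induction e using Sym2.ind with
  | _ x y =>
  rw [SimpleGraph.mem_edgeSet] at he
  have hxy : x ≠ y := he.ne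
  -- the setoid merging x and y
  set r : V → V → Prop := fun u v => u = v ∨ (u = x ∧ v = y) ∨ (u = y ∧ v = x) with hrdef
  have hequiv : Equivalence r := by
    constructor
    · intro a; exact Or.inl rfl
    · intro a b h
      rcases h with h | ⟨h1, h2⟩ | ⟨h1, h2⟩ <;> subst_vars <;> simp [hrdef]
    · intro a b c hab hbc
      rcases hab with h | ⟨h1, h2⟩ | ⟨h1, h2⟩ <;>
        rcases hbc with h' | ⟨h1', h2'⟩ | ⟨h1', h2'⟩ <;> subst_vars <;> simp [hrdef]
  set P : Setoid V := ⟨r, hequiv⟩ with hPdef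
  have hPr : ∀ u v, P.r u v ↔ r u v := fun u v => Iff.rfl
  -- characterize r with adjacency
  have hr_adj : ∀ u v, G.Adj u v → (r u v ↔ ((u = x ∧ v = y) ∨ (u = y ∧ v = x))) := by
    intro u v huv
    constructor
    · rintro (h | h | h)
      · exact absurd h huv.ne
      · exact Or.inl h
      · exact Or.inr h
    · intro h; exact Or.inr h
  -- parts of P
  have hpart_x : {v | r v x} = {x, y} := by
    ext v
    simp only [Set.mem_setOf_eq, Set.mem_insert_iff, Set.mem_singleton_iff, hrdef]
    aesop
  have hpart_y : {v | r v y} = {x, y} := by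
    ext v
    simp only [Set.mem_setOf_eq, Set.mem_insert_iff, Set.mem_singleton_iff, hrdef]
    aesop
  have hpart_z : ∀ z, z ≠ x → z ≠ y → {v | r v z} = {z} := by
    intro z hzx hzy
    ext v
    simp only [Set.mem_setOf_eq, Set.mem_singleton_iff, hrdef]
    aesop
  -- connectivity of the parts
  have hpairconn : (G.induce ({x, y} : Set V)).Connected := by
    rw [SimpleGraph.connected_iff]
    constructor
    · intro a b
      by_cases hab : a = b
      · subst hab; exact SimpleGraph.Reachable.refl _
      · apply SimpleGraph.Adj.reachable
        have ha := a.2; have hb := b.2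
        simp only [Set.mem_insert_iff, Set.mem_singleton_iff] at ha hb
        have hab' : (a : V) ≠ (b : V) := fun h => hab (Subtype.ext h)
        simp only [SimpleGraph.comap_adj, Function.Embedding.coe_subtype]
        rcases ha with ha | ha <;> rcases hb with hb | hb <;>
          rw [ha, hb] at hab' ⊢
        · exact absurd rfl hab'
        · exact he
        · exact he.symm
        · exact absurd rfl hab'
    · exact ⟨⟨x, by simp⟩⟩
  have hPC : PartsConnected G P := by
    intro z
    by_cases hzx : z = x
    · subst hzx
      rw [show {v | P.r v z} = ({z, y} : Set V) from hpart_x]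
      exact hpairconn
    by_cases hzy : z = y
    · subst hzy
      rw [show {v | P.r v z} = ({x, z} : Set V) from hpart_y]
      exact hpairconn
    · rw [show {v | P.r v z} = ({z} : Set V) from hpart_z z hzx hzy]
      rw [SimpleGraph.connected_iff]
      constructor
      · intro a b
        have : a = b := Subtype.ext (a.2.trans b.2.symm)
        subst this; exact SimpleGraph.Reachable.refl _
      · exact ⟨⟨z, rfl⟩⟩
  obtain ⟨f, hf1, hf2, hf3⟩ := hquot P hPC ⟨x, y, hxy, Or.inr (Or.inl ⟨rfl, rfl⟩)⟩
  -- Finset versions of the parts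
  have hfin_x : Finset.univ.filter (fun u => P.r u x) = {x, y} := by
    ext v
    simp only [Finset.mem_filter, Finset.mem_univ, true_and, Finset.mem_insert,
      Finset.mem_singleton]
    rw [hPr, show r v x ↔ v ∈ {v | r v x} from Iff.rfl, hpart_x]
    simp
  have hfin_z : ∀ z, z ≠ x → z ≠ y → Finset.univ.filter (fun u => P.r u z) = {z} := by
    intro z hzx hzy
    ext v
    simp only [Finset.mem_filter, Finset.mem_univ, true_and, Finset.mem_singleton]
    rw [hPr, show r v z ↔ v ∈ {v | r v z} from Iff.rfl, hpart_z z hzx hzy]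
    simp
  -- inner edge-boundary filters
  have hnr_x : ∀ v, G.Adj x v → (¬ r x v ↔ v ≠ y) := by
    intro v hv
    rw [hr_adj x v hv]
    have := hv.ne
    aesop
  have hnr_y : ∀ v, G.Adj y v → (¬ r y v ↔ v ≠ x) := by
    intro v hv
    rw [hr_adj y v hv]
    have := hv.ne
    aesop
  have hnr_z : ∀ z, z ≠ x → z ≠ y → ∀ v, G.Adj z v → ¬ r z v := by
    intro z hzx hzy v hv
    rw [hr_adj z v hv]
    rintro (⟨h1, _⟩ | ⟨h1, _⟩)
    · exact hzx h1
    · exact hzy h1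
  -- abbreviations
  set Sx : A := ∑ v ∈ Finset.univ.filter (fun v => G.Adj x v ∧ ¬ P.r x v), f x v with hSx
  set Sy : A := ∑ v ∈ Finset.univ.filter (fun v => G.Adj y v ∧ ¬ P.r y v), f y v with hSy
  -- conservation at the big part
  have hbig : Sx + Sy = β x + β y := by
    have h := hf3 x
    rw [hfin_x] at h
    rw [Finset.sum_pair hxy, Finset.sum_pair hxy] at h
    exact h
  -- conservation at singleton parts
  have hsmall : ∀ z, z ≠ x → z ≠ y →
      ∑ v ∈ Finset.univ.filter (fun v => G.Adj z v ∧ ¬ P.r z v), f z v = β z := by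
    intro z hzx hzy
    have h := hf3 z
    rw [hfin_z z hzx hzy, Finset.sum_singleton, Finset.sum_singleton] at h
    exact h
  -- filter simplification at non-special vertices
  have hfilt_z : ∀ z, z ≠ x → z ≠ y →
      Finset.univ.filter (fun v => G.Adj z v ∧ ¬ P.r z v)
        = Finset.univ.filter (fun v => G.Adj z v) := by
    intro z hzx hzy
    apply Finset.filter_congr
    intro v _
    constructor
    · rintro ⟨h, _⟩; exact h
    · intro h; exact ⟨h, hnr_z z hzx hzy v h⟩
  set δ : A := β x - Sx with hδ
  by_cases hδ0 : δ = 0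
  · -- f itself gives a flow in G - e
    have key : ∀ u v, (G.deleteEdges {s(x,y)}).Adj u v ↔ (G.Adj u v ∧ ¬ r u v) := by
      intro u v
      rw [SimpleGraph.deleteEdges_adj]
      simp only [Set.mem_singleton_iff]
      constructor
      · rintro ⟨ha, hne⟩
        refine ⟨ha, ?_⟩
        rw [hr_adj u v ha]
        rintro (⟨h1, h2⟩ | ⟨h1, h2⟩) <;> subst_vars
        · exact hne rfl
        · exact hne (Sym2.eq_swap)
      · rintro ⟨ha, hnr⟩
        refine ⟨ha, ?_⟩
        intro hS
        rw [Sym2.eq_iff] at hS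
        rw [hr_adj u v ha] at hnr
        exact hnr hS
    refine ⟨f, ?_, ?_, ?_⟩
    · intro u v huv
      rw [key] at huv
      exact hf1 u v huv.1 huv.2
    · intro u v huv
      rw [key] at huv
      exact hf2 u v huv.1 huv.2
    · intro u
      have hfilt : Finset.univ.filter (fun v => (G.deleteEdges {s(x,y)}).Adj u v)
          = Finset.univ.filter (fun v => G.Adj u v ∧ ¬ P.r u v) := by
        apply Finset.filter_congr
        intro v _
        exact key u v
      refine (Finset.sum_congr (s₂ := Finset.univ.filter (fun v => G.Adj u v ∧ ¬ P.r u v))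
        (g := fun v => f u v) ?_ (fun _ _ => rfl)).trans ?_
      · ext v; simp only [Finset.mem_filter, Finset.mem_univ, true_and]; exact key u v
      have hSxv : Sx = β x := (sub_eq_zero.mp (hδ.symm.trans hδ0)).symm
      have hSyv : Sy = β y := by
        rw [hSxv] at hbig
        exact add_left_cancel hbig
      by_cases hux : u = x
      · subst hux
        rw [← hSx]
        exact hSxv
      by_cases huy : u = y
      · subst huy
        rw [← hSy]
        exact hSyv
      · exact hsmall u hux huy
  · -- extend f to a nowhere-zero flow of G, contradiction
    exfalso
    apply hno
    set g : V → V → A := fun u v =>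
      if u = x ∧ v = y then δ else if u = y ∧ v = x then -δ else f u v with hg
    have hg_xy : g x y = δ := by
      show (if x = x ∧ y = y then δ else if x = y ∧ y = x then -δ else f x y) = δ
      rw [if_pos ⟨rfl, rfl⟩]
    have hg_yx : g y x = -δ := by
      show (if y = x ∧ x = y then δ else if y = y ∧ x = x then -δ else f y x) = -δ
      rw [if_neg (fun h => hxy h.2), if_pos ⟨rfl, rfl⟩]
    have hg_other : ∀ u v, ¬(u = x ∧ v = y) → ¬(u = y ∧ v = x) → g u v = f u v := by
      intro u v h1 h2
      show (if u = x ∧ v = y then δ else if u = y ∧ v = x then -δ else f u v) = f u v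
      rw [if_neg h1, if_neg h2]
    refine ⟨g, ?_, ?_, ?_⟩
    · intro u v huv
      by_cases h1 : u = x ∧ v = y
      · obtain ⟨h1, h2⟩ := h1; subst_vars
        rw [hg_xy, hg_yx, neg_neg]
      by_cases h2 : u = y ∧ v = x
      · obtain ⟨h1', h2'⟩ := h2; subst_vars
        rw [hg_yx, hg_xy]
      · have hnr : ¬ r u v := by
          rw [hr_adj u v huv]; rintro (h | h)
          · exact h1 h
          · exact h2 h
        rw [hg_other u v h1 h2, hg_other v u
            (fun h => h2 ⟨h.2, h.1⟩) (fun h => h1 ⟨h.2, h.1⟩)]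
        exact hf1 u v huv hnr
    · intro u v huv
      by_cases h1 : u = x ∧ v = y
      · obtain ⟨h1, h2⟩ := h1; subst_vars; rw [hg_xy]; exact hδ0
      by_cases h2 : u = y ∧ v = x
      · obtain ⟨h1', h2'⟩ := h2; subst_vars; rw [hg_yx]
        simpa using hδ0
      · have hnr : ¬ r u v := by
          rw [hr_adj u v huv]; rintro (h | h)
          · exact h1 h
          · exact h2 h
        rw [hg_other u v h1 h2]
        exact hf2 u v huv hnr
    · intro u
      by_cases hux : u = x
      · subst hux
        have hy_mem : y ∈ Finset.univ.filter (fun v => G.Adj u v) := by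
          simp [he]
        rw [← Finset.add_sum_erase _ _ hy_mem, hg_xy]
        have herase : (Finset.univ.filter (fun v => G.Adj u v)).erase y
            = Finset.univ.filter (fun v => G.Adj u v ∧ ¬ P.r u v) := by
          ext v
          simp only [Finset.mem_erase, Finset.mem_filter, Finset.mem_univ, true_and]
          constructor
          · rintro ⟨hv, ha⟩; exact ⟨ha, (hnr_x v ha).mpr hv⟩
          · rintro ⟨ha, hv⟩; exact ⟨(hnr_x v ha).mp hv, ha⟩
        have hgsum : ∑ v ∈ Finset.univ.filter (fun v => G.Adj u v ∧ ¬ P.r u v), g u v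
            = Sx := by
          rw [hSx]
          apply Finset.sum_congr rfl
          intro v hv
          simp only [Finset.mem_filter, Finset.mem_univ, true_and] at hv
          exact hg_other u v (fun h => ((hnr_x v hv.1).mp hv.2) h.2)
            (fun h => hxy h.1)
        rw [herase, hgsum]
        rw [hδ]; abel
      by_cases huy : u = y
      · subst huy
        have hx_mem : x ∈ Finset.univ.filter (fun v => G.Adj u v) := by
          simp [he.symm]
        rw [← Finset.add_sum_erase _ _ hx_mem, hg_yx]
        have herase : (Finset.univ.filter (fun v => G.Adj u v)).erase x
            = Finset.univ.filter (fun v => G.Adj u v ∧ ¬ P.r u v) := by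
          ext v
          simp only [Finset.mem_erase, Finset.mem_filter, Finset.mem_univ, true_and]
          constructor
          · rintro ⟨hv, ha⟩; exact ⟨ha, (hnr_y v ha).mpr hv⟩
          · rintro ⟨ha, hv⟩; exact ⟨(hnr_y v ha).mp hv, ha⟩
        have hgsum : ∑ v ∈ Finset.univ.filter (fun v => G.Adj u v ∧ ¬ P.r u v), g u v
            = Sy := by
          rw [hSy]
          apply Finset.sum_congr rfl
          intro v hv
          simp only [Finset.mem_filter, Finset.mem_univ, true_and] at hv
          exact hg_other u v (fun h => hxy h.1.symm)
            (fun h => ((hnr_y v hv.1).mp hv.2) h.2)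
        rw [herase, hgsum]
        have hSyv : Sy = β x + β u - Sx :=
          eq_sub_iff_add_eq.mpr (by rw [add_comm]; exact hbig)
        rw [hSyv, hδ]
        abel
      · have hgf : ∑ v ∈ Finset.univ.filter (fun v => G.Adj u v), g u v
            = ∑ v ∈ Finset.univ.filter (fun v => G.Adj u v), f u v := by
          apply Finset.sum_congr rfl
          intro v hv
          exact hg_other u v (fun h => hux h.1) (fun h => huy h.1)
        rw [hgf, ← hfilt_z u hux huy]
        exact hsmall u hux huy
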